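/- Let r > 0 and s ≥ 0 be integers. In the field ℚ(v, K), one has ∑_{t=0}^{s} (−1)^t v^{r(s−t)} [r+t−1 choose t]_v K^t [K;0,r]_v [K;0,s−t]_v = [r+s choose r]_v [K;0,r+s]_v. -/

import Mathlib

/-- The field `ℚ(v, K)` of rational functions in two variables, realized as `ℚ(v)(K)`. -/
noncomputable abbrev F2 : Type := RatFunc (RatFunc ℚ)

/-- The variable `v` of `ℚ(v, K)`. -/
noncomputable def vv : F2 := RatFunc.C RatFunc.X

/-- The variable `K` of `ℚ(v, K)`. -/
noncomputable def KK : F2 := RatFunc.X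

/-- `[K;c,t]_v = ∏_{s=1}^{t} (K v^{c−s+1} − K^{−1} v^{−c+s−1})/(v^s − v^{−s})`. -/
noncomputable def Kbr (c : ℤ) (t : ℕ) : F2 :=
  ∏ s ∈ Finset.range t,
    (KK * vv ^ (c - (s : ℤ)) - KK⁻¹ * vv ^ (-c + (s : ℤ))) /
      (vv ^ ((s : ℤ) + 1) - vv ^ (-(s : ℤ) - 1))

/-- The balanced quantum number `[c]_v = (v^c − v^{−c})/(v − v^{−1})` for `c ∈ ℤ`. -/
noncomputable def qintF (c : ℤ) : F2 := (vv ^ c - vv ^ (-c)) / (vv - vv⁻¹)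

/-- The balanced quantum factorial `[m]!_v`. -/
noncomputable def qfactF (m : ℕ) : F2 := ∏ k ∈ Finset.range m, qintF ((k : ℤ) + 1)

/-- `[c choose m]_v = [c]_v[c−1]_v⋯[c−m+1]_v/[m]!_v` for `c ∈ ℤ`, `m ∈ ℕ`. -/
noncomputable def qbinomF (c : ℤ) (m : ℕ) : F2 :=
  (∏ k ∈ Finset.range m, qintF (c - (k : ℤ))) / qfactF m


-- foundational
lemma Cinj : Function.Injective (RatFunc.C (K := RatFunc ℚ)) :=
  (RatFunc.C (K := RatFunc ℚ)).injective
lemma hK : KK ≠ 0 := RatFunc.X_ne_zero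
lemma hv : vv ≠ 0 := by
  rw [vv, ← map_zero (RatFunc.C (K := RatFunc ℚ))]
  exact fun h => RatFunc.X_ne_zero (Cinj h)
lemma hvpow (n : ℕ) (hn : 0 < n) : vv ^ n ≠ 1 := by
  intro h
  rw [vv, ← map_pow, ← map_one (RatFunc.C (K := RatFunc ℚ))] at h
  have h2 := Cinj h
  rw [← RatFunc.algebraMap_X (K := ℚ), ← map_pow,
    ← map_one (algebraMap (Polynomial ℚ) (RatFunc ℚ))] at h2
  have h3 := (RatFunc.algebraMap_injective ℚ) h2
  have := congrArg Polynomial.natDegree h3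
  simp [Polynomial.natDegree_X_pow, hn.ne'] at this
lemma hvz (m : ℤ) : vv ^ m ≠ 0 := zpow_ne_zero m hv
lemma hvone (m : ℤ) (hm : m ≠ 0) : vv ^ m ≠ 1 := by
  rcases hm.lt_or_gt with h | h
  · intro he
    have : vv ^ (-m) = 1 := by
      rw [zpow_neg, he, inv_one]
    obtain ⟨n, hn⟩ := Int.eq_ofNat_of_zero_le (by omega : (0:ℤ) ≤ -m)
    rw [hn, zpow_natCast] at this
    exact hvpow n (by omega) this
  · intro he
    obtain ⟨n, hn⟩ := Int.eq_ofNat_of_zero_le h.le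
    rw [hn, zpow_natCast] at he
    exact hvpow n (by omega) he
lemma hvne {a b : ℤ} (h : a ≠ b) : vv ^ a ≠ vv ^ b := by
  intro he
  apply hvone (a - b) (by omega)
  rw [zpow_sub₀ hv, he, div_self (hvz b)]
noncomputable def uu : F2 := vv - vv⁻¹
lemma huu : uu ≠ 0 := by
  have : vv - vv⁻¹ = vv ^ (1:ℤ) - vv ^ (-1:ℤ) := by
    rw [zpow_one, zpow_neg, zpow_one]
  rw [uu, this]
  exact sub_ne_zero.mpr (hvne (by omega))
lemma qint_ne (c : ℤ) (hc : c ≠ 0) : qintF c ≠ 0 := by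
  rw [qintF]
  exact div_ne_zero (sub_ne_zero.mpr (hvne (by omega))) (by rw [← uu]; exact huu)
lemma qfact_ne (m : ℕ) : qfactF m ≠ 0 := by
  rw [qfactF]
  exact Finset.prod_ne_zero_iff.mpr fun k _ => qint_ne _ (by omega)
lemma qint_mul_uu (c : ℤ) : qintF c * uu = vv ^ c - vv ^ (-c) := by
  rw [qintF, uu]
  have h2 : vv - vv⁻¹ ≠ 0 := by rw [← uu]; exact huu
  exact div_mul_cancel₀ _ h2
lemma qfact_succ (n : ℕ) : qfactF (n+1) = qfactF n * qintF ((n:ℤ)+1) :=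
  Finset.prod_range_succ _ _

noncomputable def ff (j : ℕ) : F2 := KK * vv ^ (-(j:ℤ)) - KK⁻¹ * vv ^ (j:ℤ)
noncomputable def FF (n : ℕ) : F2 := ∏ j ∈ Finset.range n, ff j
noncomputable def gg (r i : ℕ) : F2 := vv ^ ((r:ℤ)+(i:ℤ)) - vv ^ (-((r:ℤ)+(i:ℤ)))
noncomputable def GG (r t : ℕ) : F2 := ∏ i ∈ Finset.range t, gg r i
noncomputable def QQ (r t : ℕ) : F2 := ∏ i ∈ Finset.range t, qintF ((r:ℤ)+(i:ℤ))
noncomputable def cb : ℕ → ℕ → F2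
  | _, 0 => 1
  | 0, _+1 => 0
  | s+1, t+1 => vv ^ ((t:ℤ)+1) * cb s (t+1) + vv ^ ((t:ℤ) - (s:ℤ)) * cb s t

lemma cb_zero (s : ℕ) : cb s 0 = 1 := by cases s <;> rfl
lemma cb_zero_succ (t : ℕ) : cb 0 (t+1) = 0 := rfl
lemma cb_succ_succ (s t : ℕ) :
    cb (s+1) (t+1) = vv ^ ((t:ℤ)+1) * cb s (t+1) + vv ^ ((t:ℤ) - (s:ℤ)) * cb s t := rfl

lemma cb_of_gt : ∀ s t : ℕ, s < t → cb s t = 0 := by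
  intro s
  induction s with
  | zero => intro t ht; obtain ⟨t', rfl⟩ : ∃ t', t = t' + 1 := ⟨t - 1, by omega⟩; rfl
  | succ s ih =>
    intro t ht
    obtain ⟨t', rfl⟩ : ∃ t', t = t' + 1 := ⟨t - 1, by omega⟩
    rw [cb_succ_succ, ih (t'+1) (by omega), ih t' (by omega), mul_zero, mul_zero, add_zero]

lemma Kbr_zero (n : ℕ) : Kbr 0 n = FF n / (qfactF n * uu ^ n) := by
  rw [Kbr, FF]
  have hnum : ∀ s ∈ Finset.range n,
      (KK * vv ^ ((0:ℤ) - (s : ℤ)) - KK⁻¹ * vv ^ (-(0:ℤ) + (s : ℤ))) /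
        (vv ^ ((s : ℤ) + 1) - vv ^ (-(s : ℤ) - 1)) =
      ff s / (qintF ((s:ℤ)+1) * uu) := by
    intro s _
    rw [ff, qint_mul_uu, show ((0:ℤ) - (s:ℤ)) = -(s:ℤ) by ring,
      show (-(0:ℤ) + (s:ℤ)) = (s:ℤ) by ring, show (-((s:ℤ)+1)) = -(s:ℤ)-1 by ring]
  rw [Finset.prod_congr rfl hnum, Finset.prod_div_distrib, Finset.prod_mul_distrib,
    Finset.prod_const, Finset.card_range, ← qfactF]

lemma GG_eq (r t : ℕ) : GG r t = QQ r t * uu ^ t := by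
  rw [GG, QQ, show uu ^ t = ∏ _i ∈ Finset.range t, uu by
      rw [Finset.prod_const, Finset.card_range], ← Finset.prod_mul_distrib]
  exact Finset.prod_congr rfl fun i _ => by rw [gg, qint_mul_uu]


lemma helper1 (a b : F2) (ha : a ≠ 0) (hb : b ≠ 0) :
    a * (b - b⁻¹) + b⁻¹ * (a - a⁻¹) = a * b - (a * b)⁻¹ := by
  field_simp
  ring

lemma helper2 (a b k : F2) (ha : a ≠ 0) (hb : b ≠ 0) (hk : k ≠ 0) :
    a * (k * b⁻¹ - k⁻¹ * b) - k * b⁻¹ * (a - a⁻¹) = k * (a * b)⁻¹ - k⁻¹ * (a * b) := by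
  field_simp
  ring

lemma key_qint (t m : ℕ) :
    vv ^ ((t:ℤ)+1) * qintF ((m:ℤ)+1) + vv ^ (-((m:ℤ)+1)) * qintF ((t:ℤ)+1)
      = qintF ((t:ℤ)+(m:ℤ)+2) := by
  rw [qintF, qintF, qintF,
    show (-((t:ℤ)+(m:ℤ)+2)) = -(((t:ℤ)+1) + ((m:ℤ)+1)) by ring,
    show ((t:ℤ)+(m:ℤ)+2) = ((t:ℤ)+1) + ((m:ℤ)+1) by ring,
    zpow_neg, zpow_neg, zpow_neg, zpow_add₀ hv ((t:ℤ)+1) ((m:ℤ)+1),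
    mul_div_assoc', mul_div_assoc', ← add_div]
  congr 1
  exact helper1 _ _ (hvz _) (hvz _)

lemma key2 (r m t : ℕ) :
    vv ^ ((r:ℤ)+(t:ℤ)) * ff m - KK * vv ^ (-(m:ℤ)) * gg r t = ff (r+m+t) := by
  have hc : ((r+m+t : ℕ) : ℤ) = ((r:ℤ)+(t:ℤ)) + (m:ℤ) := by push_cast; ring
  rw [ff, ff, gg, hc,
    show (-(((r:ℤ)+(t:ℤ)) + (m:ℤ))) = -(((r:ℤ)+(t:ℤ)) + (m:ℤ)) by ring,
    zpow_neg, zpow_neg, zpow_neg, zpow_add₀ hv ((r:ℤ)+(t:ℤ)) (m:ℤ)]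
  exact helper2 _ _ _ (hvz _) (hvz _) hK

lemma cb_fact : ∀ s t : ℕ, t ≤ s → cb s t * (qfactF t * qfactF (s - t)) = qfactF s := by
  intro s
  induction s with
  | zero => intro t ht; interval_cases t; simp [cb_zero, qfactF]
  | succ s ih =>
    intro t ht
    match t with
    | 0 => simp [cb_zero, qfactF]
    | t+1 =>
      rcases Nat.lt_or_ge t s with hts | hts
      · -- t < s
        obtain ⟨m, rfl⟩ : ∃ m, s = t + (m + 1) := ⟨s - t - 1, by omega⟩
        have ih1 := ih (t+1) (by omega)
        have ih2 := ih t (by omega)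
        have key := key_qint t m
        rw [show t + (m+1) - (t+1) = m from by omega] at ih1
        rw [show t + (m+1) - t = m + 1 from by omega] at ih2
        rw [cb_succ_succ, show t + (m+1) + 1 - (t+1) = m + 1 from by omega,
          qfact_succ, qfact_succ, qfact_succ]
        rw [qfact_succ] at ih1 ih2
        rw [show ((t:ℤ) - (t + (m+1) : ℕ)) = -((m:ℤ)+1) from by push_cast; ring,
          show (((t + (m+1) : ℕ) : ℤ) + 1) = (t:ℤ)+(m:ℤ)+2 from by push_cast; ring]
        linear_combination (vv ^ ((t:ℤ)+1) * qintF ((m:ℤ)+1)) * ih1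
          + (vv ^ (-((m:ℤ)+1)) * qintF ((t:ℤ)+1)) * ih2 + qfactF (t + (m+1)) * key
      · -- t = s
        obtain rfl : t = s := by omega
        have ih2 := ih t le_rfl
        rw [Nat.sub_self] at ih2
        rw [cb_succ_succ, cb_of_gt t (t+1) (by omega), Nat.sub_self,
          show ((t:ℤ) - (t:ℤ)) = 0 from by ring, zpow_zero, mul_zero, zero_add, one_mul,
          qfact_succ]
        simp only [qfactF, Finset.range_zero, Finset.prod_empty, mul_one] at ih2 ⊢
        linear_combination qintF ((t:ℤ)+1) * ih2

lemma FF_succ (n : ℕ) : FF (n+1) = FF n * ff n := Finset.prod_range_succ _ _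
lemma GG_succ (r t : ℕ) : GG r (t+1) = GG r t * gg r t := Finset.prod_range_succ _ _

noncomputable def Xf (r s t : ℕ) : F2 :=
  (-1:F2)^t * vv ^ ((r:ℤ)*(((s:ℤ)+1)-(t:ℤ))) * (vv^(t:ℤ) * cb s t) * KK^t * GG r t * FF (s+1-t)
noncomputable def Yf (r s t : ℕ) : F2 :=
  (-1:F2)^(t+1) * vv ^ ((r:ℤ)*(((s:ℤ)+1)-((t:ℤ)+1))) * (vv^((t:ℤ)-(s:ℤ)) * cb s t) *
    KK^(t+1) * GG r (t+1) * FF (s-t)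
noncomputable def Tf (r s t : ℕ) : F2 :=
  (-1:F2)^t * vv ^ ((r:ℤ)*((s:ℤ)-(t:ℤ))) * cb s t * KK^t * GG r t * FF (s-t)

lemma term_step (r s t : ℕ) (ht : t ≤ s) :
    Xf r s t + Yf r s t = Tf r s t * ff (r+s) := by
  obtain ⟨m, rfl⟩ : ∃ m, s = t + m := ⟨s - t, by omega⟩
  have k := key2 r m t
  rw [zpow_add₀ hv] at k
  rw [Xf, Yf, Tf,
      show t + m + 1 - t = m + 1 from by omega, show t + m - t = m from by omega,
      show r + (t + m) = r + m + t from by omega,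
      FF_succ, GG_succ,
      show ((r:ℤ)*((((t+m:ℕ)):ℤ)+1-(t:ℤ))) = (r:ℤ)*(m:ℤ)+(r:ℤ) from by push_cast; ring,
      show ((r:ℤ)*((((t+m:ℕ)):ℤ)+1-((t:ℤ)+1))) = (r:ℤ)*(m:ℤ) from by push_cast; ring,
      show ((r:ℤ)*((((t+m:ℕ)):ℤ)-(t:ℤ))) = (r:ℤ)*(m:ℤ) from by push_cast; ring,
      show ((t:ℤ)-(((t+m:ℕ)):ℤ)) = -(m:ℤ) from by push_cast; ring,
      zpow_add₀ hv ((r:ℤ)*(m:ℤ)) (r:ℤ)]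
  linear_combination ((-1:F2)^t * vv^((r:ℤ)*(m:ℤ)) * cb (t+m) t * KK^t * GG r t * FF m) * k

lemma core (r s : ℕ) :
    ∑ t ∈ Finset.range (s+1), Tf r s t = ∏ j ∈ Finset.range s, ff (r+j) := by
  induction s with
  | zero => simp [Tf, cb_zero, GG, FF]
  | succ s ih =>
    have hsplit : ∀ t ∈ Finset.range (s+1), Tf r (s+1) (t+1) = Xf r s (t+1) + Yf r s t := by
      intro t ht
      rw [Tf, Xf, Yf, cb_succ_succ]
      push_cast
      ring
    have hX0 : Tf r (s+1) 0 = Xf r s 0 := by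
      rw [Tf, Xf, cb_zero, cb_zero]
      push_cast
      simp only [zpow_zero]
      ring
    have hXtop : Xf r s (s+1) = 0 := by
      rw [Xf, cb_of_gt s (s+1) (by omega)]
      ring
    calc ∑ t ∈ Finset.range (s+1+1), Tf r (s+1) t
        = (∑ t ∈ Finset.range (s+1), Tf r (s+1) (t+1)) + Tf r (s+1) 0 :=
          Finset.sum_range_succ' _ _
      _ = (∑ t ∈ Finset.range (s+1), (Xf r s (t+1) + Yf r s t)) + Xf r s 0 := by
          rw [hX0, Finset.sum_congr rfl hsplit]
      _ = ((∑ t ∈ Finset.range (s+1), Xf r s (t+1)) + Xf r s 0)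
            + ∑ t ∈ Finset.range (s+1), Yf r s t := by
          rw [Finset.sum_add_distrib]; ring
      _ = (∑ t ∈ Finset.range (s+1+1), Xf r s t) + ∑ t ∈ Finset.range (s+1), Yf r s t := by
          rw [Finset.sum_range_succ' (fun t => Xf r s t) (s+1)]
      _ = (∑ t ∈ Finset.range (s+1), Xf r s t) + ∑ t ∈ Finset.range (s+1), Yf r s t := by
          rw [Finset.sum_range_succ, hXtop, add_zero]
      _ = ∑ t ∈ Finset.range (s+1), (Xf r s t + Yf r s t) := Finset.sum_add_distrib.symm
      _ = ∑ t ∈ Finset.range (s+1), Tf r s t * ff (r+s) :=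
          Finset.sum_congr rfl fun t ht =>
            term_step r s t (by have := Finset.mem_range.mp ht; omega)
      _ = (∑ t ∈ Finset.range (s+1), Tf r s t) * ff (r+s) := (Finset.sum_mul _ _ _).symm
      _ = (∏ j ∈ Finset.range s, ff (r+j)) * ff (r+s) := by rw [ih]
      _ = ∏ j ∈ Finset.range (s+1), ff (r+j) := (Finset.prod_range_succ _ _).symm

lemma hQrefl (r t : ℕ) :
    ∏ k ∈ Finset.range t, qintF ((r:ℤ)+(t:ℤ)-1-(k:ℤ)) = QQ r t := by
  rw [QQ, ← Finset.prod_range_reflect (fun k => qintF ((r:ℤ)+(k:ℤ))) t]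
  refine Finset.prod_congr rfl fun k hk => ?_
  have hk' := Finset.mem_range.mp hk
  congr 1
  omega

lemma hnum (r s : ℕ) :
    (∏ k ∈ Finset.range r, qintF ((r:ℤ)+(s:ℤ)-(k:ℤ))) * qfactF s = qfactF (r+s) := by
  have hre : ∏ k ∈ Finset.range r, qintF ((r:ℤ)+(s:ℤ)-(k:ℤ))
      = ∏ k ∈ Finset.range r, qintF (((s+k:ℕ):ℤ)+1) := by
    rw [← Finset.prod_range_reflect (fun k => qintF (((s+k:ℕ):ℤ)+1)) r]
    refine Finset.prod_congr rfl fun k hk => ?_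
    have hk' := Finset.mem_range.mp hk
    congr 1
    omega
  have hsplit : qfactF (s+r) = qfactF s * ∏ k ∈ Finset.range r, qintF (((s+k:ℕ):ℤ)+1) := by
    rw [qfactF, Finset.prod_range_add, ← qfactF]
  rw [hre, show r + s = s + r from by omega, hsplit]
  ring


/-- For integers `r > 0`, `s ≥ 0`, in `ℚ(v,K)`:
`∑_{t=0}^{s} (−1)^t v^{r(s−t)} [r+t−1 choose t]_v K^t [K;0,r]_v [K;0,s−t]_v
  = [r+s choose r]_v [K;0,r+s]_v`. -/
theorem stmt3 (r s : ℕ) (hr : 0 < r) :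
    ∑ t ∈ Finset.range (s + 1),
        (-1 : F2) ^ t * vv ^ ((r : ℤ) * ((s : ℤ) - (t : ℤ))) *
          qbinomF ((r : ℤ) + (t : ℤ) - 1) t * KK ^ t * Kbr 0 r * Kbr 0 (s - t) =
      qbinomF ((r : ℤ) + (s : ℤ)) r * Kbr 0 (r + s) := by
  have h1 : ∀ t ∈ Finset.range (s+1),
      (-1 : F2) ^ t * vv ^ ((r : ℤ) * ((s : ℤ) - (t : ℤ))) *
          qbinomF ((r : ℤ) + (t : ℤ) - 1) t * KK ^ t * Kbr 0 r * Kbr 0 (s - t)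
      = (FF r / (qfactF r * qfactF s * uu^(r+s))) * Tf r s t := by
    intro t ht
    have ht' : t ≤ s := by have := Finset.mem_range.mp ht; omega
    have hcf := cb_fact s t ht'
    have hu : uu ≠ 0 := huu
    have hD1 : qfactF t * (qfactF r * uu^r) * (qfactF (s-t) * uu^(s-t)) ≠ 0 :=
      mul_ne_zero (mul_ne_zero (qfact_ne t) (mul_ne_zero (qfact_ne r) (pow_ne_zero _ hu)))
        (mul_ne_zero (qfact_ne (s-t)) (pow_ne_zero _ hu))
    have hD2 : qfactF r * qfactF s * uu^(r+s) ≠ 0 :=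
      mul_ne_zero (mul_ne_zero (qfact_ne r) (qfact_ne s)) (pow_ne_zero _ hu)
    calc (-1 : F2) ^ t * vv ^ ((r : ℤ) * ((s : ℤ) - (t : ℤ))) *
          qbinomF ((r : ℤ) + (t : ℤ) - 1) t * KK ^ t * Kbr 0 r * Kbr 0 (s - t)
        = ((-1 : F2) ^ t * vv ^ ((r : ℤ) * ((s : ℤ) - (t : ℤ))) * QQ r t * KK ^ t *
            FF r * FF (s-t)) /
          (qfactF t * (qfactF r * uu^r) * (qfactF (s-t) * uu^(s-t))) := by
          rw [Kbr_zero, Kbr_zero, qbinomF, hQrefl]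
          ring
      _ = (FF r * ((-1 : F2) ^ t * vv ^ ((r : ℤ) * ((s : ℤ) - (t : ℤ))) * cb s t * KK ^ t *
            (QQ r t * uu^t) * FF (s-t))) / (qfactF r * qfactF s * uu^(r+s)) := by
          rw [div_eq_div_iff hD1 hD2,
            show r + s = r + (s-t) + t from by omega, pow_add, pow_add]
          linear_combination (-((-1 : F2) ^ t * vv ^ ((r : ℤ) * ((s : ℤ) - (t : ℤ))) * QQ r t *
            KK ^ t * FF r * FF (s-t) * uu^r * uu^(s-t) * uu^t * qfactF r)) * hcf
      _ = (FF r / (qfactF r * qfactF s * uu^(r+s))) * Tf r s t := by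
          rw [Tf, GG_eq]
          ring
  rw [Finset.sum_congr rfl h1, ← Finset.mul_sum, core, Kbr_zero, qbinomF,
    show FF (r+s) = FF r * ∏ j ∈ Finset.range s, ff (r+j) from Finset.prod_range_add ff r s]
  have hn := hnum r s
  have hq1 : qfactF r ≠ 0 := qfact_ne r
  have hq2 : qfactF s ≠ 0 := qfact_ne s
  have hq5 : qfactF (r+s) ≠ 0 := qfact_ne (r+s)
  have hu : uu ≠ 0 := huu
  field_simp
  linear_combination (-((FF r * ∏ j ∈ Finset.range s, ff (r+j)))) * hn
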